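/- Under the assumptions of the derivative formula, if additionally Σ_i ω_i = 0 and ω ≠ 0, then dr_uni/dK > 0 strictly: the universal order parameter is strictly monotonically increasing in K along the stable phase-locked branch. -/

import Mathlib

/-- If moreover `Σ_i ω_i = 0` and `ω ≠ 0`, the derivative of the universal order
parameter, `(2/(K² Σ_i k_i)) Σ_{n=2}^N (v_n · ω)²/(−λ_n)`, is strictly positive:
`r_uni` is strictly increasing in `K` along the stable phase-locked branch. -/
theorem runi_deriv_pos (N : ℕ) [NeZero N] (hN : 2 ≤ N)
    (K : ℝ) (hK : 0 < K) (sumk : ℝ) (hsumk : 0 < sumk)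
    (v : Fin N → Fin N → ℝ) (lam : Fin N → ℝ)
    (horth : ∀ n p, ∑ i, v n i * v p i = if n = p then 1 else 0)
    (hv1 : v 0 = fun _ => 1 / Real.sqrt N)
    (hlamneg : ∀ n, n ≠ 0 → lam n < 0)
    (ω : Fin N → ℝ) (hω0 : ∑ i, ω i = 0) (hω : ω ≠ 0) :
    0 < 2 / (K ^ 2 * sumk) *
        ∑ n ∈ Finset.univ.erase 0, (∑ i, v n i * ω i) ^ 2 / (-lam n) := by
  have hfac : 0 < 2 / (K ^ 2 * sumk) := by positivity
  apply mul_pos hfac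
  -- the matrix of eigenvectors
  set M : Matrix (Fin N) (Fin N) ℝ := fun n i => v n i with hM
  have hMMT : M * M.transpose = 1 := by
    ext n p
    rw [Matrix.mul_apply, Matrix.one_apply]
    simp only [Matrix.transpose_apply]
    simp [Matrix.mul_apply, Matrix.transpose_apply, hM, horth n p, Matrix.one_apply]
  have hMTM : M.transpose * M = 1 := mul_eq_one_comm.mp hMMT
  -- there exists n ≠ 0 with nonzero inner product
  have hex : ∃ n : Fin N, n ≠ 0 ∧ (∑ i, v n i * ω i) ≠ 0 := by
    by_contra h
    push_neg at h
    have hall : ∀ n, M.mulVec ω n = 0 := by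
      intro n
      by_cases hn : n = 0
      · subst hn
        simp only [Matrix.mulVec, dotProduct, hM, hv1]
        rw [← Finset.mul_sum, hω0, mul_zero]
      · simpa [Matrix.mulVec, dotProduct, hM] using h n hn
    have : ω = 0 := by
      have h3 : M.mulVec ω = 0 := funext hall
      calc ω = (M.transpose * M).mulVec ω := by simp [hMTM]
        _ = M.transpose.mulVec (M.mulVec ω) := by rw [Matrix.mulVec_mulVec]
        _ = 0 := by rw [h3]; simp
    exact hω this
  obtain ⟨n, hn, hne⟩ := hex
  apply Finset.sum_pos'
  · intro m hm
    have hmne : m ≠ 0 := (Finset.mem_erase.mp hm).1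
    have : 0 < -lam m := by linarith [hlamneg m hmne]
    positivity
  · refine ⟨n, Finset.mem_erase.mpr ⟨hn, Finset.mem_univ n⟩, ?_⟩
    have : 0 < -lam n := by linarith [hlamneg n hn]
    have hsq : 0 < (∑ i, v n i * ω i) ^ 2 := by positivity
    positivity
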